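/- arXiv:1602.08867 — 4 statements merged into one kernel-verified Lean document; each statement's English description precedes it below -/
import Mathlib

section
/- Let w be a word on an alphabet T and let A be a subset of T containing at least one letter of w. Then r(r(w)|A) = r(w|A), where both restrictions are defined since reduction does not change the set of letters occurring in a word. -/
/-- One-step reduction of words: either an adjacent equal pair `aa` is replaced
by `a`, or (for a word of length at least two whose first and last letters are
equal) the last letter is deleted. -/
def Step {S : Type*} (w v : List S) : Prop :=
  (∃ (u₁ : List S) (a : S) (u₂ : List S), w = u₁ ++ [a, a] ++ u₂ ∧ v = u₁ ++ [a] ++ u₂) ∨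
  (2 ≤ w.length ∧ w.head? = w.getLast? ∧ v = w.dropLast)

/-- A word is reduced if it has no two equal adjacent letters and either has
length one or has different first and last letters. -/
def Reduced {S : Type*} (w : List S) : Prop :=
  w.Chain' (· ≠ ·) ∧ (w.length = 1 ∨ w.head? ≠ w.getLast?)

/-- `IsReduction w u` : the reduced word `u` is obtainable from `w` by a finite
(possibly empty) sequence of one-step reductions, i.e. `u = r(w)`. -/
def IsReduction {S : Type*} (w u : List S) : Prop :=
  Relation.ReflTransGen Step w u ∧ Reduced u

open Classical in
/-- The restriction `w|A` of a word to a sub-alphabet `A`: delete all letters not in `A`. -/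
noncomputable def restrictWord {S : Type*} (w : List S) (A : Set S) : List S :=
  w.filter fun a => decide (a ∈ A)

/-- A word is crossing if it contains the pattern `… a … b … a … b …` with `a ≠ b`. -/
def Crossing {S : Type*} (w : List S) : Prop :=
  ∃ (i j k l : ℕ) (hij : i < j) (hjk : j < k) (hkl : k < l) (hl : l < w.length),
    w[i]'(by omega) = w[k]'(by omega) ∧ w[j]'(by omega) = w[l]'hl ∧
    w[i]'(by omega) ≠ w[j]'(by omega)

namespace RRRAux

open List

variable {S : Type*} [DecidableEq S]

theorem destutter'_head? (l : List S) (a : S) :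
    (l.destutter' (· ≠ ·) a).head? = some a := by
  induction l generalizing a with
  | nil => rfl
  | cons c l ih =>
    by_cases h : a = c
    · rw [List.destutter'_cons_neg _ (by simpa using h)]
      exact ih a
    · rw [List.destutter'_cons_pos _ (show a ≠ c from h)]
      rfl

theorem destutter'_getLast? (l : List S) (a : S) :
    (l.destutter' (· ≠ ·) a).getLast? = (a :: l).getLast? := by
  induction l generalizing a with
  | nil => rfl
  | cons c l ih =>
    rw [List.getLast?_cons_cons]
    by_cases h : a = c
    · rw [List.destutter'_cons_neg _ (by simpa using h)]
      subst h; exact ih a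
    · rw [List.destutter'_cons_pos _ (show a ≠ c from h)]
      have hne := List.destutter'_ne_nil (R := (· ≠ ·)) (l := l) (a := c)
      obtain ⟨d, ds, hd⟩ := List.exists_cons_of_ne_nil hne
      rw [hd]
      rw [List.getLast?_cons_cons, ← hd]
      exact ih c

theorem destutter'_concat (l : List S) (a y : S) :
    ((l ++ [y]).destutter' (· ≠ ·) a) =
      if (a :: l).getLast? = some y then l.destutter' (· ≠ ·) a
      else l.destutter' (· ≠ ·) a ++ [y] := by
  induction l generalizing a with
  | nil =>
    simp only [List.nil_append, List.destutter'_singleton, List.destutter'_nil,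
      List.getLast?_singleton, Option.some.injEq]
    by_cases h : a = y
    · simp [h]
    · simp [h, Ne.symm h]
  | cons c l ih =>
    rw [List.getLast?_cons_cons]
    by_cases h : a = c
    · rw [List.cons_append, List.destutter'_cons_neg _ (by simpa using h),
        List.destutter'_cons_neg _ (a := c) (b := a) (by simpa using h)]
      subst h
      exact ih a
    · rw [List.cons_append, List.destutter'_cons_pos _ (show a ≠ c from h),
        List.destutter'_cons_pos _ (show a ≠ c from h)]
      rw [ih c]
      split <;> simp

theorem destutter'_pair (u₂ : List S) (a : S) : ∀ (u₁ : List S) (x : S),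
    ((u₁ ++ a :: a :: u₂).destutter' (· ≠ ·) x) = (u₁ ++ a :: u₂).destutter' (· ≠ ·) x := by
  intro u₁
  induction u₁ with
  | nil =>
    intro x
    simp only [List.nil_append]
    by_cases h : x = a
    · subst h
      rw [List.destutter'_cons_neg _ (by simp),
        List.destutter'_cons_neg _ (by simp)]
    · rw [List.destutter'_cons_pos _ (show x ≠ a from h),
        List.destutter'_cons_pos _ (show x ≠ a from h),
        List.destutter'_cons_neg _ (by simp)]
  | cons c u₁ ih =>
    intro x
    by_cases h : x = c
    · rw [List.cons_append, List.destutter'_cons_neg _ (by simpa using h),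
        List.cons_append, List.destutter'_cons_neg _ (by simpa using h)]
      exact ih x
    · rw [List.cons_append, List.destutter'_cons_pos _ (show x ≠ c from h),
        List.cons_append, List.destutter'_cons_pos _ (show x ≠ c from h)]
      rw [ih c]

/-- Explicit normal form: destutter, then trim the last letter if it equals the head. -/
def nf (l : List S) : List S :=
  if (l.destutter (· ≠ ·)).head? = (l.destutter (· ≠ ·)).getLast? ∧
      2 ≤ (l.destutter (· ≠ ·)).length
  then (l.destutter (· ≠ ·)).dropLast else l.destutter (· ≠ ·)

theorem nf_congr {l m : List S} (h : l.destutter (· ≠ ·) = m.destutter (· ≠ ·)) :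
    nf l = nf m := by
  unfold nf
  rw [h]

theorem decomp {w : List S} (h2 : 2 ≤ w.length) (hhl : w.head? = w.getLast?) :
    ∃ b s, w = (b :: s) ++ [b] := by
  have hw : w ≠ [] := by rintro rfl; simp at h2
  obtain ⟨b, t, rfl⟩ := List.exists_cons_of_ne_nil hw
  have ht : t ≠ [] := by rintro rfl; simp at h2
  have hbl : b = t.getLast ht := by
    have h2' : (b :: t).getLast? = some (t.getLast ht) := by
      rw [List.getLast?_eq_getLast (List.cons_ne_nil _ _)]
      congr 1
      exact List.getLast_cons ht
    rw [List.head?_cons, h2'] at hhl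
    exact Option.some.inj hhl
  refine ⟨b, t.dropLast, ?_⟩
  conv_lhs => rw [← List.dropLast_concat_getLast ht, ← hbl]
  simp

theorem nf_step {w v : List S} (h : Step w v) : nf w = nf v := by
  rcases h with ⟨u₁, a, u₂, rfl, rfl⟩ | ⟨h2, hhl, rfl⟩
  · apply nf_congr
    cases u₁ with
    | nil =>
      show List.destutter _ ([a, a] ++ u₂) = List.destutter _ ([a] ++ u₂)
      simp only [List.cons_append, List.nil_append]
      rw [List.destutter_cons', List.destutter_cons',
        List.destutter'_cons_neg _ (by simp)]
    | cons c u₁ =>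
      simp only [List.cons_append, List.append_assoc, List.singleton_append]
      rw [List.destutter_cons', List.destutter_cons']
      exact destutter'_pair u₂ a u₁ c
  · obtain ⟨b, s, rfl⟩ := decomp h2 hhl
    have hdrop : ((b :: s) ++ [b]).dropLast = b :: s := List.dropLast_concat
    rw [hdrop]
    have hd : ((b :: s) ++ [b]).destutter (· ≠ ·) =
        if (b :: s).getLast? = some b then (b :: s).destutter (· ≠ ·)
        else (b :: s).destutter (· ≠ ·) ++ [b] := by
      rw [List.cons_append, List.destutter_cons', destutter'_concat, List.destutter_cons']
    by_cases hlast : (b :: s).getLast? = some b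
    · apply nf_congr
      rw [hd, if_pos hlast]
    · rw [if_neg hlast] at hd
      set d := (b :: s).destutter (· ≠ ·) with hdef
      have hdne : d ≠ [] := by
        rw [hdef, List.destutter_cons']
        exact List.destutter'_ne_nil _ _
      have hdh : d.head? = some b := by
        rw [hdef, List.destutter_cons']; exact destutter'_head? s b
      have hdl : d.getLast? = (b :: s).getLast? := by
        rw [hdef, List.destutter_cons']; exact destutter'_getLast? s b
      unfold nf
      rw [hd]
      rw [if_pos, if_neg]
      · rw [List.dropLast_concat]
      · rintro ⟨h1, -⟩
        rw [hdh, hdl] at h1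
        exact hlast h1.symm
      · constructor
        · rw [List.getLast?_concat]
          obtain ⟨e, es, he⟩ := List.exists_cons_of_ne_nil hdne
          rw [he]
          rw [he] at hdh
          simpa using hdh
        · have : 1 ≤ d.length := List.length_pos_iff.mpr hdne
          rw [List.length_append]
          simp only [List.length_cons, List.length_nil]
          omega

theorem nf_reduced {u : List S} (h : Reduced u) : nf u = u := by
  have hd : u.destutter (· ≠ ·) = u := List.destutter_of_isChain _ u h.1
  unfold nf
  rw [hd, if_neg]
  rcases h.2 with h1 | h1
  · rintro ⟨-, h2⟩; omega
  · rintro ⟨h2, -⟩; exact h1 h2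

theorem nf_rtg {w u : List S} (h : Relation.ReflTransGen Step w u) : nf w = nf u := by
  induction h with
  | refl => rfl
  | tail _ h2 ih => exact ih.trans (nf_step h2)

theorem isReduction_eq_nf {w u : List S} (h : IsReduction w u) : u = nf w := by
  rw [nf_rtg h.1, nf_reduced h.2]

theorem step_filter {w v : List S} (p : S → Bool) (h : Step w v) :
    Step (w.filter p) (v.filter p) ∨ w.filter p = v.filter p := by
  rcases h with ⟨u₁, a, u₂, rfl, rfl⟩ | ⟨h2, hhl, rfl⟩
  · by_cases hp : p a = true
    · left; left
      exact ⟨u₁.filter p, a, u₂.filter p, by simp [List.filter_append, hp],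
        by simp [List.filter_append, hp]⟩
    · right
      simp [List.filter_append, hp]
  · obtain ⟨b, s, rfl⟩ := decomp h2 hhl
    rw [List.dropLast_concat]
    by_cases hp : p b = true
    · left; right
      have hw : ((b :: s) ++ [b]).filter p = b :: (s.filter p ++ [b]) := by
        simp [List.filter_append, hp]
      have hv : (b :: s).filter p = b :: s.filter p := by simp [hp]
      rw [hw, hv]
      refine ⟨by simp, ?_, ?_⟩
      · rw [List.head?_cons, show b :: (s.filter p ++ [b]) = (b :: s.filter p) ++ [b] from rfl,
          List.getLast?_concat]
      · rw [show b :: (s.filter p ++ [b]) = (b :: s.filter p) ++ [b] from rfl,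
          List.dropLast_concat]
    · right
      simp [List.filter_append, hp]

theorem rtg_filter {w u : List S} (p : S → Bool) (h : Relation.ReflTransGen Step w u) :
    Relation.ReflTransGen Step (w.filter p) (u.filter p) := by
  induction h with
  | refl => exact Relation.ReflTransGen.refl
  | tail _ h2 ih =>
    rcases step_filter p h2 with h3 | h3
    · exact ih.tail h3
    · rwa [← h3]

end RRRAux

/-- Lemma 1.8 (reduce–restrict–reduce): for a word `w` on `T` and a subset `A`
of `T` containing at least one letter of `w`, `r(r(w)|A) = r(w|A)`. -/
theorem reduce_restrict_reduce {T : Type*} (w : List T) (hw : w ≠ []) (A : Set T)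
    (hA : ∃ a ∈ w, a ∈ A)
    (u x y : List T)
    (hu : IsReduction w u)
    (hx : IsReduction (restrictWord u A) x)
    (hy : IsReduction (restrictWord w A) y) :
    x = y := by
  classical
  have hxe := RRRAux.isReduction_eq_nf hx
  have hye := RRRAux.isReduction_eq_nf hy
  have hrtg : Relation.ReflTransGen Step (restrictWord w A) (restrictWord u A) :=
    RRRAux.rtg_filter _ hu.1
  rw [hxe, hye, RRRAux.nf_rtg hrtg]
end

section
/- Every word w on an alphabet S can be transformed by a finite sequence of one-step reductions into a reduced word, and this reduced word is unique: if u and v are reduced words each obtainable from w by a (possibly empty) finite sequence of one-step reductions, then u = v. -/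
open List Relation

section Aux
variable {S : Type*} [DecidableEq S]

lemma head?_destutter' (l : List S) (b : S) : (l.destutter' (· ≠ ·) b).head? = some b := by
  induction l generalizing b with
  | nil => rfl
  | cons c t ih =>
    rw [destutter'_cons]
    split
    · rfl
    · exact ih b

lemma getLast?_destutter' (l : List S) (b : S) :
    (l.destutter' (· ≠ ·) b).getLast? = (b :: l).getLast? := by
  induction l generalizing b with
  | nil => rfl
  | cons c t ih =>
    rw [destutter'_cons]
    split
    next h =>
      obtain ⟨x, xs, he⟩ := exists_cons_of_ne_nil (t.destutter'_ne_nil (· ≠ ·) (a := c))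
      rw [getLast?_cons_cons, he, getLast?_cons_cons, ← he, ih c]
    next h =>
      push_neg at h
      subst h
      rw [ih b]
      cases t <;> simp

lemma head?_destutter (w : List S) : (w.destutter (· ≠ ·)).head? = w.head? := by
  cases w with
  | nil => rfl
  | cons a t => rw [destutter_cons', head?_destutter', head?_cons]

lemma getLast?_destutter (w : List S) : (w.destutter (· ≠ ·)).getLast? = w.getLast? := by
  cases w with
  | nil => rfl
  | cons a t => rw [destutter_cons', getLast?_destutter']

lemma destutter'_squash (u₁ : List S) (b a : S) (u₂ : List S) :
    destutter' (· ≠ ·) b (u₁ ++ [a, a] ++ u₂) = destutter' (· ≠ ·) b (u₁ ++ [a] ++ u₂) := by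
  induction u₁ generalizing b with
  | nil =>
    simp only [nil_append, cons_append]
    by_cases hba : b = a
    · subst hba
      simp [destutter'_cons]
    · simp [destutter'_cons, hba]
  | cons c t ih =>
    simp only [cons_append]
    rw [destutter'_cons, destutter'_cons]
    by_cases hbc : b = c
    · simp only [hbc, ne_eq, not_true_eq_false, if_neg, if_false, not_not]
      rw [ih c]
    · simp only [ne_eq, hbc, not_false_eq_true, if_true, if_pos]
      rw [ih c]

lemma destutter_squash (u₁ : List S) (a : S) (u₂ : List S) :
    destutter (· ≠ ·) (u₁ ++ [a, a] ++ u₂) = destutter (· ≠ ·) (u₁ ++ [a] ++ u₂) := by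
  cases u₁ with
  | nil =>
    simp only [nil_append, cons_append]
    rw [destutter_cons', destutter_cons']
    simp [destutter'_cons]
  | cons c t =>
    simp only [cons_append]
    rw [destutter_cons', destutter_cons', destutter'_squash]

lemma destutter'_concat (l : List S) (b c : S) (h : (b :: l).getLast? ≠ some c) :
    destutter' (· ≠ ·) b (l ++ [c]) = destutter' (· ≠ ·) b l ++ [c] := by
  induction l generalizing b with
  | nil =>
    simp only [getLast?_singleton, ne_eq, Option.some.injEq] at h
    simp [destutter'_singleton, h]
  | cons d t ih =>
    rw [getLast?_cons_cons] at h
    simp only [cons_append]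
    rw [destutter'_cons, destutter'_cons]
    split
    · rw [ih d h, cons_append]
    next hbd =>
      push_neg at hbd
      subst hbd
      refine ih b ?_
      cases t <;> simpa using h

lemma destutter_concat (l : List S) (c : S) (hl : l ≠ []) (h : l.getLast? ≠ some c) :
    destutter (· ≠ ·) (l ++ [c]) = destutter (· ≠ ·) l ++ [c] := by
  cases l with
  | nil => exact absurd rfl hl
  | cons a t =>
    rw [cons_append, destutter_cons', destutter_cons', destutter'_concat _ _ _ h]

lemma not_chain'_decomp {w : List S} (h : ¬ w.Chain' (· ≠ ·)) :
    ∃ (u₁ : List S) (a : S) (u₂ : List S), w = u₁ ++ [a, a] ++ u₂ := by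
  induction w with
  | nil => exact absurd isChain_nil h
  | cons a t ih =>
    cases t with
    | nil => exact absurd (isChain_singleton a) h
    | cons b s =>
      simp only [Chain', isChain_cons_cons] at h
      push_neg at h
      by_cases hab : a = b
      · subst hab
        exact ⟨[], a, s, rfl⟩
      · obtain ⟨u₁, x, u₂, he⟩ := ih (h hab)
        exact ⟨a :: u₁, x, u₂, by simp [he]⟩

noncomputable def nf (w : List S) : List S :=
  if h : 2 ≤ (w.destutter (· ≠ ·)).length ∧
      (w.destutter (· ≠ ·)).head? = (w.destutter (· ≠ ·)).getLast? then
    nf (w.destutter (· ≠ ·)).dropLast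
  else w.destutter (· ≠ ·)
termination_by w.length
decreasing_by
  have h1 := (w.destutter_sublist (· ≠ ·)).length_le
  rw [length_dropLast]
  omega

lemma nf_destutter (w : List S) : nf (w.destutter (· ≠ ·)) = nf w := by
  conv_lhs => rw [nf]
  conv_rhs => rw [nf]
  rw [destutter_idem]

lemma nf_ne_nil (w : List S) (hw : w ≠ []) : nf w ≠ [] := by
  rw [nf]
  split
  next h =>
    refine nf_ne_nil _ ?_
    rw [← length_pos_iff_ne_nil, length_dropLast]
    omega
  next h => rwa [ne_eq, destutter_eq_nil]
termination_by w.length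
decreasing_by
  have h1 := (w.destutter_sublist (· ≠ ·)).length_le
  rw [length_dropLast]
  omega

lemma reduced_nf (w : List S) (hw : w ≠ []) : Reduced (nf w) := by
  rw [nf]
  split
  next h =>
    refine reduced_nf _ ?_
    rw [← length_pos_iff_ne_nil, length_dropLast]
    omega
  next h =>
    push_neg at h
    refine ⟨w.isChain_destutter _, ?_⟩
    have h2 : (w.destutter (· ≠ ·)) ≠ [] := by rwa [ne_eq, destutter_eq_nil]
    rw [← length_pos_iff_ne_nil] at h2
    by_cases hl : 2 ≤ (w.destutter (· ≠ ·)).length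
    · exact Or.inr (h hl)
    · exact Or.inl (by omega)
termination_by w.length
decreasing_by
  have h1 := (w.destutter_sublist (· ≠ ·)).length_le
  rw [length_dropLast]
  omega

lemma nf_of_reduced {w : List S} (h : Reduced w) : nf w = w := by
  rw [nf]
  have hd : w.destutter (· ≠ ·) = w := destutter_of_isChain _ _ h.1
  rw [dif_neg]
  · exact hd
  · rw [hd]
    rintro ⟨h1, h2⟩
    rcases h.2 with h3 | h3
    · omega
    · exact h3 h2

lemma step_nf {w v : List S} (h : Step w v) : nf w = nf v := by
  rcases h with ⟨u₁, a, u₂, rfl, rfl⟩ | ⟨h2, hh, rfl⟩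
  · rw [← nf_destutter (u₁ ++ [a, a] ++ u₂), ← nf_destutter (u₁ ++ [a] ++ u₂), destutter_squash]
  · rcases w.eq_nil_or_concat with rfl | ⟨l, c, rfl⟩
    · simp at h2
    rcases l.eq_nil_or_concat with rfl | ⟨ys, b, rfl⟩
    · simp at h2
    simp only [concat_eq_append] at h2 hh ⊢
    rw [dropLast_concat]
    by_cases hbc : b = c
    · subst hbc
      have he : ys ++ [b] ++ [b] = ys ++ [b, b] ++ ([] : List S) := by simp
      rw [he, ← nf_destutter (ys ++ [b, b] ++ []), destutter_squash]
      simp only [append_nil]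
      rw [nf_destutter]
    · have hlast2 : (ys ++ [b]).getLast? = some b := getLast?_concat
      have hd : destutter (· ≠ ·) (ys ++ [b] ++ [c]) =
          destutter (· ≠ ·) (ys ++ [b]) ++ [c] := by
        refine destutter_concat _ _ (by simp) ?_
        rw [hlast2]
        simp [hbc]
      have hne : destutter (· ≠ ·) (ys ++ [b]) ≠ [] := by
        rw [ne_eq, destutter_eq_nil]; simp
      rw [nf, dif_pos]
      · rw [hd, dropLast_concat, nf_destutter]
      · constructor
        · rw [hd, length_append]
          have := length_pos_of_ne_nil hne
          simp only [length_singleton]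
          omega
        · rw [head?_destutter, getLast?_destutter]
          exact hh

lemma rtg_destutter_aux : ∀ (n : ℕ) (w : List S), w.length ≤ n →
    ReflTransGen Step w (w.destutter (· ≠ ·)) := by
  intro n
  induction n with
  | zero =>
    intro w hw
    rw [Nat.le_zero, length_eq_zero_iff] at hw
    subst hw
    exact ReflTransGen.refl
  | succ n ih =>
    intro w hw
    by_cases h : w.Chain' (· ≠ ·)
    · rw [destutter_of_isChain _ _ h]
    · obtain ⟨u₁, a, u₂, rfl⟩ := not_chain'_decomp h
      have hs : Step (u₁ ++ [a, a] ++ u₂) (u₁ ++ [a] ++ u₂) := Or.inl ⟨u₁, a, u₂, rfl, rfl⟩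
      have hlen : (u₁ ++ [a] ++ u₂).length ≤ n := by
        simp only [length_append, length_cons, length_singleton] at hw ⊢
        omega
      have iht := ih (u₁ ++ [a] ++ u₂) hlen
      rw [destutter_squash]
      exact ReflTransGen.head hs iht

lemma rtg_destutter (w : List S) : ReflTransGen Step w (w.destutter (· ≠ ·)) :=
  rtg_destutter_aux w.length w le_rfl

lemma rtg_nf (w : List S) : ReflTransGen Step w (nf w) := by
  rw [nf]
  split
  next h =>
    have h1 : ReflTransGen Step w (w.destutter (· ≠ ·)) := rtg_destutter w
    have h2 : Step (w.destutter (· ≠ ·)) (w.destutter (· ≠ ·)).dropLast :=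
      Or.inr ⟨h.1, h.2, rfl⟩
    exact (h1.trans (ReflTransGen.single h2)).trans (rtg_nf _)
  next h => exact rtg_destutter w
termination_by w.length
decreasing_by
  have h1 := (w.destutter_sublist (· ≠ ·)).length_le
  rw [length_dropLast]
  omega

lemma rtg_nf_eq {w u : List S} (h : ReflTransGen Step w u) : nf w = nf u := by
  induction h with
  | refl => rfl
  | tail hs hstep ih => rw [ih, step_nf hstep]

end Aux

/-- Every word can be transformed by finitely many one-step reductions into a
reduced word, and the resulting reduced word is unique. -/
theorem exists_unique_reduction {S : Type*} (w : List S) (hw : w ≠ []) :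
    (∃ u, IsReduction w u) ∧ ∀ u v, IsReduction w u → IsReduction w v → u = v := by
  haveI : DecidableEq S := Classical.decEq S
  constructor
  · exact ⟨nf w, rtg_nf w, reduced_nf w hw⟩
  · rintro u v ⟨hu1, hu2⟩ ⟨hv1, hv2⟩
    have h1 := rtg_nf_eq hu1
    have h2 := rtg_nf_eq hv1
    rw [nf_of_reduced hu2] at h1
    rw [nf_of_reduced hv2] at h2
    exact h1.symm.trans h2
end

section
/- If a word w on an alphabet S is crossing, then its reduction r(w) is crossing. Equivalently, if r(w) is non-crossing then w is non-crossing. -/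
open List in
private lemma aux_cons_drop {S : Type*} {w : List S} {i : ℕ} (hi : i < w.length)
    {s : List S} (hs : s.Sublist (w.drop (i+1))) : (w[i] :: s).Sublist (w.drop i) := by
  rw [List.drop_eq_getElem_cons hi]
  exact hs.cons₂ _

private lemma drop_sublist_drop {S : Type*} (w : List S) {i j : ℕ} (h : i ≤ j) :
    (w.drop j).Sublist (w.drop i) := by
  rw [show j = i + (j - i) by omega, ← List.drop_drop]; exact List.drop_sublist _ _

/-- `Crossing` is equivalent to containing the sublist `[a,b,a,b]` with `a ≠ b`. -/
private lemma crossing_iff_sublist {S : Type*} (w : List S) :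
    Crossing w ↔ ∃ a b : S, a ≠ b ∧ [a, b, a, b].Sublist w := by
  constructor
  · rintro ⟨i, j, k, l, hij, hjk, hkl, hl, h1, h2, h3⟩
    refine ⟨w[i]'(by omega), w[j]'(by omega), h3, ?_⟩
    have h4 : [w[l]'hl].Sublist (w.drop l) :=
      aux_cons_drop hl (List.nil_sublist _)
    have h3' : ([w[k]'(by omega), w[l]'hl]).Sublist (w.drop k) :=
      aux_cons_drop (by omega) (h4.trans (drop_sublist_drop w (by omega)))
    have h2' : ([w[j]'(by omega), w[k]'(by omega), w[l]'hl]).Sublist (w.drop j) :=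
      aux_cons_drop (by omega) (h3'.trans (drop_sublist_drop w (by omega)))
    have h1' : ([w[i]'(by omega), w[j]'(by omega), w[k]'(by omega), w[l]'hl]).Sublist (w.drop i) :=
      aux_cons_drop (by omega) (h2'.trans (drop_sublist_drop w (by omega)))
    rw [← h1, ← h2] at h1'
    exact (h1'.trans (List.drop_sublist _ _))
  · rintro ⟨a, b, hab, hsub⟩
    rw [List.sublist_iff_exists_fin_orderEmbedding_get_eq] at hsub
    obtain ⟨f, hf⟩ := hsub
    let i0 : Fin ([a,b,a,b] : List S).length := ⟨0, by norm_num⟩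
    let i1 : Fin ([a,b,a,b] : List S).length := ⟨1, by norm_num⟩
    let i2 : Fin ([a,b,a,b] : List S).length := ⟨2, by norm_num⟩
    let i3 : Fin ([a,b,a,b] : List S).length := ⟨3, by norm_num⟩
    have e0 : w.get (f i0) = a := by have := hf i0; simpa [i0] using this.symm
    have e1 : w.get (f i1) = b := by have := hf i1; simpa [i1] using this.symm
    have e2 : w.get (f i2) = a := by have := hf i2; simpa [i2] using this.symm
    have e3 : w.get (f i3) = b := by have := hf i3; simpa [i3] using this.symm
    simp only [List.get_eq_getElem] at e0 e1 e2 e3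
    refine ⟨f i0, f i1, f i2, f i3,
      f.strictMono (show i0 < i1 by simp only [i0, i1, Fin.mk_lt_mk]; norm_num),
      f.strictMono (show i1 < i2 by simp only [i1, i2, Fin.mk_lt_mk]; norm_num),
      f.strictMono (show i2 < i3 by simp only [i2, i3, Fin.mk_lt_mk]; norm_num),
      (f i3).2, ?_, ?_, ?_⟩
    · rw [e0, e2]
    · rw [e1, e3]
    · rw [e0, e1]; exact hab

private lemma step_preserves {S : Type*} {w v : List S} (hs : Step w v)
    {a b : S} (hab : a ≠ b) (h : [a, b, a, b].Sublist w) :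
    ∃ a' b' : S, a' ≠ b' ∧ [a', b', a', b'].Sublist v := by
  rcases hs with ⟨u₁, c, u₂, rfl, rfl⟩ | ⟨hlen, hhl, rfl⟩
  · -- adjacent pair reduction
    rw [List.append_assoc, List.sublist_append_iff] at h
    obtain ⟨l₁, l₂, heq, h₁, h₂⟩ := h
    rw [List.sublist_append_iff] at h₂
    obtain ⟨t₁, t₂, rfl, ht₁, ht₂⟩ := h₂
    have hmem : ∀ x ∈ t₁, x = c := fun x hx => by simpa using ht₁.subset hx
    have hlen := ht₁.length_le
    have ht₁' : t₁.Sublist [c] := by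
      match t₁, hmem, hlen with
      | [], _, _ => exact List.nil_sublist _
      | [x], hm, _ => rw [hm x (by simp)]
      | [x, y], hm, _ =>
        -- t₁ = [c, c] : contradiction with pattern having no equal adjacent letters
        exfalso
        rw [hm x (by simp), hm y (by simp)] at heq
        have hch : ([a, b, a, b] : List S).Chain' (· ≠ ·) := by
          simp [List.Chain', List.isChain_cons_cons, hab, Ne.symm hab]
        rw [heq] at hch
        have := (List.isChain_append.mp hch).2.1
        simp only [List.cons_append, List.nil_append, List.isChain_cons_cons] at this
        exact this.1 rfl
    refine ⟨a, b, hab, ?_⟩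
    rw [heq, List.append_assoc]
    exact (h₁.append ((ht₁'.append ht₂)))
  · -- delete last letter, first = last
    have hne : w ≠ [] := by rintro rfl; simp at hlen
    have hw : w = w.dropLast ++ [w.getLast hne] := (List.dropLast_append_getLast hne).symm
    set c := w.getLast hne with hc
    have hdne : w.dropLast ≠ [] := by
      intro h0
      have := congrArg List.length hw
      rw [h0] at this; simp at this; omega
    have hhead : w.dropLast.head? = some c := by
      have h1 : w.head? = some c := by
        rw [hhl, List.getLast?_eq_getLast hne]
      rw [hw, List.head?_append_of_ne_nil _ hdne] at h1
      exact h1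
    rw [hw, List.sublist_append_iff] at h
    obtain ⟨l₁, l₂, heq, h₁, h₂⟩ := h
    rcases List.sublist_singleton.mp h₂ with rfl | rfl
    · rw [List.append_nil] at heq
      rw [← heq] at h₁
      exact ⟨a, b, hab, h₁⟩
    · -- l₁ = [a, b, a] and c = b
      have hlen2 : l₁.length = 3 := by
        have := congrArg List.length heq; simp at this; omega
      obtain ⟨hl₁, hcb⟩ : l₁ = [a, b, a] ∧ c = b := by
        have h0 : l₁ ++ [c] = [a, b, a] ++ [b] := by simpa using heq.symm
        have h' := List.append_inj' h0 (by simp)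
        exact ⟨h'.1, by simpa using h'.2⟩
      subst hl₁
      obtain ⟨x, v', hv'⟩ := List.exists_cons_of_ne_nil hdne
      rw [hv'] at hhead
      simp only [List.head?_cons, Option.some.injEq] at hhead
      subst hhead
      rw [hv'] at h₁
      have h₁' : ([a, b, a] : List S).Sublist v' := by
        rcases List.cons_sublist_cons'.mp h₁ with h | ⟨rfl, _⟩
        · exact h
        · exact absurd hcb hab
      refine ⟨b, a, Ne.symm hab, ?_⟩
      rw [hv', hcb]
      exact h₁'.cons₂ b

/-- If a word is crossing, so is its reduction. -/
theorem crossing_reduction {S : Type*} (w u : List S) (hw : w ≠ [])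
    (hu : IsReduction w u) (hc : Crossing w) : Crossing u := by
  obtain ⟨hr, -⟩ := hu
  rw [crossing_iff_sublist] at hc ⊢
  induction hr with
  | refl => exact hc
  | tail _ hstep ih =>
    obtain ⟨a, b, hab, hsub⟩ := ih
    exact step_preserves hstep hab hsub
end

section
/- Let K be a field of characteristic zero, let V be a unital associative K-algebra, and let E : V → K be a K-linear map with E(1) = 1. Then there exists a unique family of multilinear maps κ_n : Vⁿ → K (one for each n ≥ 1) such that for every N ≥ 1 and all a_1, …, a_N ∈ V, E(a_1 ⋯ a_N) equals the sum, over all non-crossing partitions f of N (of any size k), of the products ∏_{i=1}^{k} κ_{|f⁻¹(i)|}(a_{j_1}, …, a_{j_m}), where j_1 < ⋯ < j_m is the increasing enumeration of f⁻¹(i). -/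
open scoped BigOperators

/-- A non-crossing partition of `{1, …, N}` (modelled as `Fin N`) of size `k`:
a surjection `f : Fin N → Fin k` such that (ordering) `i < j` implies
`min f⁻¹(i) < min f⁻¹(j)`, and (non-crossing) there are no indices
`p < q < r < s` with `f p = f r`, `f q = f s` and `f p ≠ f q`. -/
def IsNCPartition {N k : ℕ} (f : Fin N → Fin k) : Prop :=
  Function.Surjective f ∧
  (∀ i j : Fin k, i < j →
    (Finset.univ.filter fun p => f p = i).min < (Finset.univ.filter fun p => f p = j).min) ∧
  ¬ ∃ p q r s : Fin N, p < q ∧ q < r ∧ r < s ∧ f p = f r ∧ f q = f s ∧ f p ≠ f q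

open Classical in
/-- The moment–cumulant relation of free probability: a family `κ` of
multilinear functionals satisfies it when, for every `N ≥ 1` and all
`a₁, …, a_N`, the expectation `E(a₁ ⋯ a_N)` is the sum over all non-crossing
partitions `f` of `{1, …, N}` (of any size `k`) of the products over the blocks
`f⁻¹(i)` of `κ_{|f⁻¹(i)|}` evaluated at the letters of the block, listed in
increasing order of their indices. -/
noncomputable def FreeMomentCumulantFormula (K V : Type*) [Field K] [Ring V] [Algebra K V]
    (E : V →ₗ[K] K) (κ : ∀ n : ℕ, MultilinearMap K (fun _ : Fin n => V) K) : Prop :=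
  ∀ N : ℕ, 1 ≤ N → ∀ a : Fin N → V,
    E (List.ofFn a).prod =
      ∑ k ∈ Finset.Icc 1 N,
        ∑ f ∈ Finset.univ.filter (fun f : Fin N → Fin k => IsNCPartition f),
          ∏ i : Fin k,
            κ (Finset.univ.filter fun p => f p = i).card
              (fun q => a ((Finset.univ.filter fun p => f p = i).orderIsoOfFin rfl q))

namespace FreeCumulantsAux

variable {K V : Type*} [Field K] [Ring V] [Algebra K V]

open Classical in
lemma blockProd_update_eq (κ : ∀ n : ℕ, MultilinearMap K (fun _ : Fin n => V) K)
    {N k : ℕ} (f : Fin N → Fin k) [DecidableEq (Fin N)] (a : Fin N → V) (p : Fin N) (z : V) :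
    (∏ i : Fin k,
      κ (Finset.univ.filter fun q => f q = i).card
        (fun q => Function.update a p z
          ((Finset.univ.filter fun q => f q = i).orderIsoOfFin rfl q))) =
    (∏ i ∈ Finset.univ.erase (f p),
      κ (Finset.univ.filter fun q => f q = i).card
        (fun q => a ((Finset.univ.filter fun q => f q = i).orderIsoOfFin rfl q))) *
    κ (Finset.univ.filter fun q => f q = f p).card
      (Function.update
        (fun q => a ((Finset.univ.filter fun q => f q = f p).orderIsoOfFin rfl q))
        (((Finset.univ.filter fun q => f q = f p).orderIsoOfFin rfl).symm
          ⟨p, by simp⟩) z) := by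
  rw [← Finset.prod_erase_mul _ _ (Finset.mem_univ (f p))]
  congr 1
  · refine Finset.prod_congr rfl fun i hi => ?_
    congr 1
    funext q
    refine Function.update_of_ne ?_ _ _
    intro hq
    have hmem := ((Finset.univ.filter fun r => f r = i).orderIsoOfFin rfl q).2
    rw [Finset.mem_filter] at hmem
    rw [hq] at hmem
    exact (Finset.mem_erase.1 hi).1 hmem.2.symm
  · congr 1
    funext q
    by_cases hq :
        (((Finset.univ.filter fun r => f r = f p).orderIsoOfFin rfl q : Fin N)) = p
    · have hq2 : q = ((Finset.univ.filter fun r => f r = f p).orderIsoOfFin rfl).symm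
          ⟨p, by simp⟩ := by
        have h3 := OrderIso.symm_apply_apply
          ((Finset.univ.filter fun r => f r = f p).orderIsoOfFin rfl) q
        rw [show ((Finset.univ.filter fun r => f r = f p).orderIsoOfFin rfl q)
            = ⟨p, by simp⟩ from Subtype.ext hq] at h3
        exact h3.symm
      rw [hq, Function.update_self, ← hq2, Function.update_self]
    · have hq2 : q ≠ ((Finset.univ.filter fun r => f r = f p).orderIsoOfFin rfl).symm
          ⟨p, by simp⟩ := by
        intro h
        apply hq
        rw [h, OrderIso.apply_symm_apply]
      rw [Function.update_of_ne hq, Function.update_of_ne hq2]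

open Classical in
noncomputable def blockProd (κ : ∀ n : ℕ, MultilinearMap K (fun _ : Fin n => V) K)
    {N k : ℕ} (f : Fin N → Fin k) : MultilinearMap K (fun _ : Fin N => V) K where
  toFun a := ∏ i : Fin k,
    κ (Finset.univ.filter fun p => f p = i).card
      (fun q => a ((Finset.univ.filter fun p => f p = i).orderIsoOfFin rfl q))
  map_update_add' := by
    intro _ a p x y
    rw [blockProd_update_eq, blockProd_update_eq, blockProd_update_eq,
      MultilinearMap.map_update_add, mul_add]
  map_update_smul' := by
    intro _ a p c x
    rw [blockProd_update_eq, blockProd_update_eq, MultilinearMap.map_update_smul,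
      smul_eq_mul, smul_eq_mul]
    ring

open Classical in
@[simp] lemma blockProd_apply (κ : ∀ n : ℕ, MultilinearMap K (fun _ : Fin n => V) K)
    {N k : ℕ} (f : Fin N → Fin k) (a : Fin N → V) :
    blockProd κ f a = ∏ i : Fin k,
      κ (Finset.univ.filter fun p => f p = i).card
        (fun q => a ((Finset.univ.filter fun p => f p = i).orderIsoOfFin rfl q)) := rfl

open Classical in
noncomputable def kappa (E : V →ₗ[K] K) (n : ℕ) :
    MultilinearMap K (fun _ : Fin n => V) K :=
  E.compMultilinearMap (MultilinearMap.mkPiAlgebraFin K n V) -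
    ∑ k ∈ Finset.Icc 2 n,
      ∑ f ∈ Finset.univ.filter (fun f : Fin n → Fin k => IsNCPartition f),
        blockProd (fun m => if h : m < n then kappa E m else 0) f
  termination_by n
  decreasing_by exact h

lemma eval_cast (κ : ∀ n : ℕ, MultilinearMap K (fun _ : Fin n => V) K)
    {N : ℕ} (a : Fin N → V) (s : Finset (Fin N)) (hs : s = Finset.univ) :
    κ s.card (fun q => a (s.orderIsoOfFin rfl q)) = κ N a := by
  have key : ∀ (m : ℕ) (h : m = N) (e : Fin m → Fin N), StrictMono e →
      κ m (fun q => a (e q)) = κ N a := by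
    intro m h e he
    subst h
    have hbij : Function.Surjective e := Finite.surjective_of_injective he.injective
    have hiso := StrictMono.orderIsoOfSurjective e he hbij
    have he2 : ∀ q, e q = q := by
      intro q
      have h4 := Subsingleton.elim (StrictMono.orderIsoOfSurjective e he hbij)
        (OrderIso.refl (Fin m))
      have h5 : e q = (StrictMono.orderIsoOfSurjective e he hbij) q := rfl
      rw [h5, h4]; rfl
    congr 1
    funext q
    rw [he2]
  refine key s.card ?_ _ ?_
  · rw [hs, Finset.card_fin]
  · intro q q' hqq'
    have := (s.orderIsoOfFin rfl).strictMono hqq'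
    exact this

lemma isNC_one {N : ℕ} (hN : 1 ≤ N) (f : Fin N → Fin 1) : IsNCPartition f := by
  refine ⟨fun i => ⟨⟨0, hN⟩, Subsingleton.elim _ _⟩, fun i j hij => ?_, ?_⟩
  · exact absurd hij (by rw [Subsingleton.elim i j]; exact lt_irrefl j)
  · rintro ⟨p, q, r, t, _, _, _, _, _, hne⟩
    exact hne (Subsingleton.elim _ _)

lemma block_pos {N k : ℕ} {f : Fin N → Fin k} (hf : Function.Surjective f) (i : Fin k) :
    0 < (Finset.univ.filter fun p => f p = i).card := by
  obtain ⟨p, hp⟩ := hf i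
  exact Finset.card_pos.2 ⟨p, by simp [hp]⟩

open Classical in
lemma block_lt {N k : ℕ} {f : Fin N → Fin k} (hf : Function.Surjective f) (hk : 2 ≤ k)
    (i : Fin k) : (Finset.univ.filter fun p => f p = i).card < N := by
  obtain ⟨j, hj⟩ := Fintype.exists_ne_of_one_lt_card (by simp; omega) i
  obtain ⟨p, hp⟩ := hf j
  have hss : (Finset.univ.filter fun p => f p = i) ⊂ Finset.univ := by
    rw [Finset.ssubset_iff_of_subset (Finset.filter_subset _ _)]
    exact ⟨p, Finset.mem_univ p, by simp [hp, hj]⟩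
  have := Finset.card_lt_card hss
  simpa using this

open Classical in
noncomputable def tailSum (κ : ∀ n : ℕ, MultilinearMap K (fun _ : Fin n => V) K)
    (N : ℕ) (a : Fin N → V) : K :=
  ∑ k ∈ Finset.Icc 2 N,
    ∑ f ∈ Finset.univ.filter (fun f : Fin N → Fin k => IsNCPartition f),
      ∏ i : Fin k,
        κ (Finset.univ.filter fun p => f p = i).card
          (fun q => a ((Finset.univ.filter fun p => f p = i).orderIsoOfFin rfl q))

open Classical in
lemma formula_split (κ : ∀ n : ℕ, MultilinearMap K (fun _ : Fin n => V) K)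
    {N : ℕ} (hN : 1 ≤ N) (a : Fin N → V) :
    (∑ k ∈ Finset.Icc 1 N,
      ∑ f ∈ Finset.univ.filter (fun f : Fin N → Fin k => IsNCPartition f),
        ∏ i : Fin k,
          κ (Finset.univ.filter fun p => f p = i).card
            (fun q => a ((Finset.univ.filter fun p => f p = i).orderIsoOfFin rfl q)))
    = κ N a + tailSum κ N a := by
  have hins : Finset.Icc 1 N = insert 1 (Finset.Icc 2 N) := by
    ext m
    simp only [Finset.mem_Icc, Finset.mem_insert]
    omega
  rw [hins, Finset.sum_insert (by simp)]
  congr 1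
  have huniv : (Finset.univ.filter fun f : Fin N → Fin 1 => IsNCPartition f)
      = Finset.univ := by
    ext f
    simp [isNC_one hN f]
  rw [huniv, Finset.univ_unique, Finset.sum_singleton, Fin.prod_univ_one]
  exact eval_cast κ a _ (by ext p; simp [Subsingleton.elim ((default : Fin N → Fin 1) p) 0])

open Classical in
lemma tailSum_congr (κ κ' : ∀ n : ℕ, MultilinearMap K (fun _ : Fin n => V) K)
    (N : ℕ) (a : Fin N → V)
    (h : ∀ m, 1 ≤ m → m < N → κ m = κ' m) :
    tailSum κ N a = tailSum κ' N a := by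
  unfold tailSum
  refine Finset.sum_congr rfl fun k hk => Finset.sum_congr rfl fun f hf =>
    Finset.prod_congr rfl fun i _ => ?_
  have hsurj : Function.Surjective f := ((Finset.mem_filter.1 hf).2).1
  have h2k : 2 ≤ k := (Finset.mem_Icc.1 hk).1
  rw [h _ (block_pos hsurj i) (block_lt hsurj h2k i)]

open Classical in
lemma kappa_formula (E : V →ₗ[K] K) : FreeMomentCumulantFormula K V E (kappa E) := by
  intro N hN a
  rw [formula_split (kappa E) hN a]
  have hdef : kappa E N = E.compMultilinearMap (MultilinearMap.mkPiAlgebraFin K N V) -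
      ∑ k ∈ Finset.Icc 2 N,
        ∑ f ∈ Finset.univ.filter (fun f : Fin N → Fin k => IsNCPartition f),
          blockProd (fun m => if h : m < N then kappa E m else 0) f := by
    rw [kappa]
  have hsum : (∑ k ∈ Finset.Icc 2 N,
      ∑ f ∈ Finset.univ.filter (fun f : Fin N → Fin k => IsNCPartition f),
        blockProd (fun m => if h : m < N then kappa E m else 0) f) a
      = tailSum (kappa E) N a := by
    rw [MultilinearMap.sum_apply]
    refine Finset.sum_congr rfl fun k hk => ?_
    rw [MultilinearMap.sum_apply]
    refine Finset.sum_congr rfl fun f hf => ?_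
    rw [blockProd_apply]
    refine Finset.prod_congr rfl fun i _ => ?_
    have hsurj : Function.Surjective f := ((Finset.mem_filter.1 hf).2).1
    have h2k : 2 ≤ k := (Finset.mem_Icc.1 hk).1
    rw [dif_pos (block_lt hsurj h2k i)]
  rw [hdef, MultilinearMap.sub_apply, hsum, LinearMap.compMultilinearMap_apply,
    MultilinearMap.mkPiAlgebraFin_apply, sub_add_cancel]

open Classical in
lemma formula_unique (E : V →ₗ[K] K)
    (κ κ' : ∀ n : ℕ, MultilinearMap K (fun _ : Fin n => V) K)
    (h : FreeMomentCumulantFormula K V E κ) (h' : FreeMomentCumulantFormula K V E κ') :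
    ∀ n : ℕ, 1 ≤ n → κ n = κ' n := by
  intro n
  induction n using Nat.strong_induction_on with
  | _ n ih =>
    intro hn
    refine MultilinearMap.ext fun a => ?_
    have e1 := h n hn a
    rw [formula_split κ hn a] at e1
    have e2 := h' n hn a
    rw [formula_split κ' hn a] at e2
    have hS : tailSum κ n a = tailSum κ' n a :=
      tailSum_congr κ κ' n a fun m hm1 hm2 => ih m hm2 hm1
    have := e1.symm.trans e2
    rw [hS] at this
    exact add_right_cancel this

end FreeCumulantsAux

/-- Existence and uniqueness of free cumulants: for a non-commutative
probability space `(V, E)` over a field `K` of characteristic zero, there is a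
unique family of multilinear maps `κ_n : Vⁿ → K` (`n ≥ 1`) whose multiplicative
extension over non-crossing partitions satisfies the defining moment–cumulant
equation. -/
theorem free_cumulants_exist_unique (K V : Type*) [Field K] [CharZero K]
    [Ring V] [Algebra K V] (E : V →ₗ[K] K) (hE : E 1 = 1) :
    ∃ κ : ∀ n : ℕ, MultilinearMap K (fun _ : Fin n => V) K,
      FreeMomentCumulantFormula K V E κ ∧
      ∀ κ' : ∀ n : ℕ, MultilinearMap K (fun _ : Fin n => V) K,
        FreeMomentCumulantFormula K V E κ' → ∀ n : ℕ, 1 ≤ n → κ n = κ' n := by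
  exact ⟨FreeCumulantsAux.kappa E, FreeCumulantsAux.kappa_formula E,
    fun κ' hκ' => FreeCumulantsAux.formula_unique E _ κ'
      (FreeCumulantsAux.kappa_formula E) hκ'⟩
end
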